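/- Let {Φ_k}_{k∈K} (K a finite index set) be a partition of X into nonempty subsets, and let f satisfy ε_k-differential privacy on each Φ_k with ε_k ≥ 0. Let E_m > 0 and suppose that E'(Φ_k) ≥ e^{ε_k}·E_m for every k. Then for every observed pseudo-location x' ∈ X with Σ_{y∈X} π(y)f(x'|y) > 0, the conditional expected inference error satisfies ExpEr(x') ≥ E_m. -/

import Mathlib

open Finset Real

/-- If {Φ_k} is a partition of X, f satisfies ε_k-DP on each Φ_k,
E_m > 0 and E'(Φ_k) ≥ e^{ε_k}·E_m for every k, then for every observed x' with
positive denominator, ExpEr(x') ≥ E_m. -/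
theorem stmt_0 {X : Type*} [Fintype X] [Nonempty X] [MetricSpace X]
    (pr : X → ℝ) (hprpos : ∀ x, 0 < pr x) (hprsum : ∑ x, pr x = 1)
    (f : X → X → ℝ) (hf0 : ∀ x x', 0 ≤ f x x') (hf1 : ∀ x, ∑ x', f x x' = 1)
    {K : Type*} [Fintype K] (Φ : K → Finset X)
    (hne : ∀ k, (Φ k).Nonempty)
    (hdisj : ∀ k l, k ≠ l → Disjoint (Φ k) (Φ l))
    (hcov : ∀ x : X, ∃ k, x ∈ Φ k)
    (ε : K → ℝ) (hε : ∀ k, 0 ≤ ε k)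
    (hDP : ∀ k, ∀ x ∈ Φ k, ∀ y ∈ Φ k, ∀ x' : X, f x x' ≤ Real.exp (ε k) * f y x')
    (Em : ℝ) (hEm : 0 < Em)
    (hbound : ∀ k,
      Real.exp (ε k) * Em ≤
        univ.inf' univ_nonempty
          (fun xhat => ∑ x ∈ Φ k, (pr x / ∑ y ∈ Φ k, pr y) * dist xhat x))
    (x' : X) (hden : 0 < ∑ y, pr y * f y x') :
    Em ≤
      univ.inf' univ_nonempty
        (fun xhat => ∑ x, (pr x * f x x' / ∑ y, pr y * f y x') * dist xhat x) := by
  classical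
  have hdisj' : Set.PairwiseDisjoint (↑(univ : Finset K)) Φ := by
    intro k _ l _ hkl
    exact hdisj k l hkl
  have huniv : (univ : Finset X) = (univ : Finset K).biUnion Φ := by
    ext x
    simpa using hcov x
  apply Finset.le_inf'
  intro xhat _
  have hkey : Em * (∑ y, pr y * f y x') ≤ ∑ x, pr x * f x x' * dist xhat x := by
    have split : ∀ g : X → ℝ, ∑ x, g x = ∑ k, ∑ x ∈ Φ k, g x := by
      intro g
      rw [huniv, Finset.sum_biUnion hdisj']
    rw [split (fun y => pr y * f y x'), split (fun x => pr x * f x x' * dist xhat x),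
        Finset.mul_sum]
    apply Finset.sum_le_sum
    intro k _
    set S := ∑ y ∈ Φ k, pr y with hS
    set Dk := ∑ y ∈ Φ k, pr y * f y x' with hDk
    have hSpos : 0 < S := Finset.sum_pos (fun y _ => hprpos y) (hne k)
    have hDknn : 0 ≤ Dk := Finset.sum_nonneg fun y _ => mul_nonneg (hprpos y).le (hf0 y x')
    have hexp : 0 < Real.exp (ε k) := Real.exp_pos _
    have hflb : ∀ x ∈ Φ k, Dk ≤ Real.exp (ε k) * f x x' * S := by
      intro x hx
      calc Dk = ∑ y ∈ Φ k, pr y * f y x' := rfl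
        _ ≤ ∑ y ∈ Φ k, pr y * (Real.exp (ε k) * f x x') := by
            apply Finset.sum_le_sum
            intro y hy
            exact mul_le_mul_of_nonneg_left (hDP k y hy x hx x') (hprpos y).le
        _ = Real.exp (ε k) * f x x' * S := by rw [← Finset.sum_mul]; ring
    have hdistb : Real.exp (ε k) * Em * S ≤ ∑ x ∈ Φ k, pr x * dist xhat x := by
      have h1 := (hbound k).trans (Finset.inf'_le _ (Finset.mem_univ xhat))
      have h2 : ∑ x ∈ Φ k, (pr x / S) * dist xhat x
          = (∑ x ∈ Φ k, pr x * dist xhat x) / S := by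
        rw [Finset.sum_div]; exact Finset.sum_congr rfl fun x _ => by ring
      rw [h2, le_div_iff₀ hSpos] at h1
      linarith
    have heq : (Dk / (Real.exp (ε k) * S)) * (Real.exp (ε k) * Em * S) = Em * Dk := by
      field_simp
    calc Em * Dk = (Dk / (Real.exp (ε k) * S)) * (Real.exp (ε k) * Em * S) := heq.symm
      _ ≤ (Dk / (Real.exp (ε k) * S)) * (∑ x ∈ Φ k, pr x * dist xhat x) :=
          mul_le_mul_of_nonneg_left hdistb (by positivity)
      _ ≤ ∑ x ∈ Φ k, pr x * f x x' * dist xhat x := by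
          rw [Finset.mul_sum]
          apply Finset.sum_le_sum
          intro x hx
          have hfx : Dk / (Real.exp (ε k) * S) ≤ f x x' := by
            rw [div_le_iff₀ (by positivity)]
            calc Dk ≤ Real.exp (ε k) * f x x' * S := hflb x hx
              _ = f x x' * (Real.exp (ε k) * S) := by ring
          have hd : 0 ≤ dist xhat x := dist_nonneg
          have hprd : 0 ≤ pr x * dist xhat x := mul_nonneg (hprpos x).le hd
          calc Dk / (Real.exp (ε k) * S) * (pr x * dist xhat x)
              ≤ f x x' * (pr x * dist xhat x) := mul_le_mul_of_nonneg_right hfx hprd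
            _ = pr x * f x x' * dist xhat x := by ring
  have hrw : ∑ x, (pr x * f x x' / ∑ y, pr y * f y x') * dist xhat x
      = (∑ x, pr x * f x x' * dist xhat x) / (∑ y, pr y * f y x') := by
    rw [Finset.sum_div]; exact Finset.sum_congr rfl fun x _ => by ring
  rw [hrw, le_div_iff₀ hden]
  linarith
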